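/- Let p, q ∈ (0,1) with p > q, and let ψ0, ψ1 ∈ [0,1] with ψ0 + ψ1 < 1. Define p̃ = (1−ψ0−ψ1)·p + ψ0 and q̃ = (1−ψ0−ψ1)·q + ψ0 (so that 0 < q̃ < p̃ < 1). Then the following two strict inequalities hold: (1−p)·ln( p̃(1−q̃) / (q̃(1−p̃)) ) − (1−q)·(p̃−q̃)/(q̃(1−q̃)) < 0, and −p·ln( p̃(1−q̃) / (q̃(1−p̃)) ) + q·(p̃−q̃)/(q̃(1−q̃)) < 0. Equivalently, the partial derivatives of H(p̃, q̃) = p̃·ln(p̃/q̃) + (1−p̃)·ln((1−p̃)/(1−q̃)) with respect to ψ0 and with respect to ψ1 are both strictly negative. -/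

import Mathlib

lemma log_lt_div_sub' (X Y : ℝ) (hY : 0 < Y) (hXY : Y < X) :
    Real.log (X / Y) < (X - Y) / Y := by
  have hX : 0 < X := lt_trans hY hXY
  have hne : X / Y ≠ 1 := by
    intro h
    rw [div_eq_one_iff_eq (ne_of_gt hY)] at h
    linarith
  have h := Real.log_lt_sub_one_of_pos (by positivity) hne
  have : X / Y - 1 = (X - Y) / Y := by field_simp
  linarith

lemma div_sub_lt_log' (X Y : ℝ) (hY : 0 < Y) (hXY : Y < X) :
    (X - Y) / X < Real.log (X / Y) := by
  have hX : 0 < X := lt_trans hY hXY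
  have hne : Y / X ≠ 1 := by
    intro h
    rw [div_eq_one_iff_eq (ne_of_gt hX)] at h
    linarith
  have h := Real.log_lt_sub_one_of_pos (by positivity : (0:ℝ) < Y / X) hne
  have hlog : Real.log (Y / X) = - Real.log (X / Y) := by
    rw [← Real.log_inv]
    congr 1
    field_simp
  have h2 : Y / X - 1 = -((X - Y) / X) := by field_simp; ring
  rw [hlog, h2] at h
  linarith

lemma hasDerivAt_Hcomp (P Q : ℝ → ℝ) (c d x : ℝ)
    (hP : HasDerivAt P c x) (hQ : HasDerivAt Q d x)
    (hP0 : 0 < P x) (hP1 : P x < 1) (hQ0 : 0 < Q x) (hQ1 : Q x < 1) :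
    HasDerivAt (fun y => P y * Real.log (P y / Q y)
        + (1 - P y) * Real.log ((1 - P y) / (1 - Q y)))
      (c * Real.log (P x * (1 - Q x) / (Q x * (1 - P x)))
        + d * ((Q x - P x) / (Q x * (1 - Q x)))) x := by
  have hQne : Q x ≠ 0 := ne_of_gt hQ0
  have hPne : P x ≠ 0 := ne_of_gt hP0
  have h1P : (1:ℝ) - P x ≠ 0 := by linarith
  have h1Q : (1:ℝ) - Q x ≠ 0 := by linarith
  have h1P0 : (0:ℝ) < 1 - P x := by linarith
  have h1Q0 : (0:ℝ) < 1 - Q x := by linarith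
  have d1 : HasDerivAt (fun y => P y / Q y) ((c * Q x - P x * d) / (Q x)^2) x :=
    hP.div hQ hQne
  have d2 : HasDerivAt (fun y => Real.log (P y / Q y))
      (((c * Q x - P x * d) / (Q x)^2) / (P x / Q x)) x :=
    d1.log (by positivity)
  have d3 := hP.mul d2
  have dP' : HasDerivAt (fun y => 1 - P y) (-c) x := by
    have h := (hasDerivAt_const x (1:ℝ)).sub hP; rw [zero_sub] at h; exact h
  have dQ' : HasDerivAt (fun y => 1 - Q y) (-d) x := by
    have h := (hasDerivAt_const x (1:ℝ)).sub hQ; rw [zero_sub] at h; exact h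
  have d4 : HasDerivAt (fun y => (1 - P y) / (1 - Q y))
      ((-c * (1 - Q x) - (1 - P x) * (-d)) / ((1 - Q x))^2) x :=
    dP'.div dQ' h1Q
  have d5 : HasDerivAt (fun y => Real.log ((1 - P y) / (1 - Q y)))
      (((-c * (1 - Q x) - (1 - P x) * (-d)) / ((1 - Q x))^2) / ((1 - P x) / (1 - Q x))) x :=
    d4.log (by positivity)
  have d6 := dP'.mul d5
  have := d3.add d6
  refine this.congr_deriv ?_
  have e1 : Real.log (P x * (1 - Q x) / (Q x * (1 - P x)))
      = Real.log (P x) + Real.log (1 - Q x) - (Real.log (Q x) + Real.log (1 - P x)) := by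
    rw [Real.log_div (by positivity) (by positivity), Real.log_mul hPne h1Q,
      Real.log_mul hQne h1P]
  have e2 : Real.log (P x / Q x) = Real.log (P x) - Real.log (Q x) :=
    Real.log_div hPne hQne
  have e3 : Real.log ((1 - P x) / (1 - Q x)) = Real.log (1 - P x) - Real.log (1 - Q x) :=
    Real.log_div h1P h1Q
  rw [e1, e2, e3]
  field_simp
  ring

/-- The key inequalities of Appendix A of the paper (proof of Lemma 1): the
Kullback–Leibler-type quantity `H(p̃, q̃)` between the encrypted-bit Bernoulli
distributions is strictly decreasing in each flip probability `ψ0` and `ψ1`. -/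
theorem stmt_14 (p q : ℝ) (hp : p ∈ Set.Ioo (0 : ℝ) 1) (hq : q ∈ Set.Ioo (0 : ℝ) 1)
    (hpq : q < p)
    (ψ0 ψ1 : ℝ) (h0 : ψ0 ∈ Set.Icc (0 : ℝ) 1) (h1 : ψ1 ∈ Set.Icc (0 : ℝ) 1)
    (hsum : ψ0 + ψ1 < 1)
    (pt qt : ℝ) (hpt : pt = (1 - ψ0 - ψ1) * p + ψ0) (hqt : qt = (1 - ψ0 - ψ1) * q + ψ0)
    (H : ℝ → ℝ → ℝ)
    (hH : ∀ x y, H x y = x * Real.log (x / y) + (1 - x) * Real.log ((1 - x) / (1 - y))) :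
    (1 - p) * Real.log (pt * (1 - qt) / (qt * (1 - pt)))
        - (1 - q) * ((pt - qt) / (qt * (1 - qt))) < 0 ∧
    (-p) * Real.log (pt * (1 - qt) / (qt * (1 - pt)))
        + q * ((pt - qt) / (qt * (1 - qt))) < 0 ∧
    (∃ d < (0 : ℝ),
      HasDerivAt (fun x => H ((1 - x - ψ1) * p + x) ((1 - x - ψ1) * q + x)) d ψ0) ∧
    (∃ d < (0 : ℝ),
      HasDerivAt (fun y => H ((1 - ψ0 - y) * p + ψ0) ((1 - ψ0 - y) * q + ψ0)) d ψ1) := by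
  obtain ⟨hp0, hp1⟩ := hp
  obtain ⟨hq0, hq1⟩ := hq
  obtain ⟨h00, h01⟩ := h0
  obtain ⟨h10, h11⟩ := h1
  have ht : (0:ℝ) < 1 - ψ0 - ψ1 := by linarith
  have hqt0 : 0 < qt := by rw [hqt]; nlinarith
  have hptqt : qt < pt := by rw [hpt, hqt]; nlinarith
  have hpt1 : pt < 1 := by rw [hpt]; nlinarith
  have hpt0 : 0 < pt := lt_trans hqt0 hptqt
  have hqt1 : qt < 1 := lt_trans hptqt hpt1
  have h1pt : (0:ℝ) < 1 - pt := by linarith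
  have h1qt : (0:ℝ) < 1 - qt := by linarith
  -- the two core inequalities
  have hXY : qt * (1 - pt) < pt * (1 - qt) := by nlinarith
  have hYpos : 0 < qt * (1 - pt) := by positivity
  have hLub := log_lt_div_sub' (pt * (1 - qt)) (qt * (1 - pt)) hYpos hXY
  have hLlb := div_sub_lt_log' (pt * (1 - qt)) (qt * (1 - pt)) hYpos hXY
  have hdiff : pt * (1 - qt) - qt * (1 - pt) = pt - qt := by ring
  rw [hdiff] at hLub hLlb
  -- key comparison facts
  have hkey1 : (1 - p) * (1 - qt) ≤ (1 - q) * (1 - pt) := by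
    rw [hpt, hqt]; nlinarith
  have hkey2 : q * pt ≤ p * qt := by
    rw [hpt, hqt]; nlinarith
  have ineq1 : (1 - p) * Real.log (pt * (1 - qt) / (qt * (1 - pt)))
      - (1 - q) * ((pt - qt) / (qt * (1 - qt))) < 0 := by
    have hstep : (1 - p) * ((pt - qt) / (qt * (1 - pt)))
        ≤ (1 - q) * ((pt - qt) / (qt * (1 - qt))) := by
      rw [mul_div_assoc', mul_div_assoc',
        div_le_div_iff₀ (by positivity) (by positivity)]
      nlinarith [mul_pos hqt0 (sub_pos.mpr hptqt)]
    have : (1 - p) * Real.log (pt * (1 - qt) / (qt * (1 - pt)))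
        < (1 - p) * ((pt - qt) / (qt * (1 - pt))) := by
      have hp' : (0:ℝ) < 1 - p := by linarith
      exact (mul_lt_mul_iff_right₀ hp').mpr hLub
    linarith
  have ineq2 : (-p) * Real.log (pt * (1 - qt) / (qt * (1 - pt)))
      + q * ((pt - qt) / (qt * (1 - qt))) < 0 := by
    have hstep : q * ((pt - qt) / (qt * (1 - qt)))
        ≤ p * ((pt - qt) / (pt * (1 - qt))) := by
      rw [mul_div_assoc', mul_div_assoc',
        div_le_div_iff₀ (by positivity) (by positivity)]
      nlinarith [mul_pos h1qt (sub_pos.mpr hptqt)]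
    have : p * ((pt - qt) / (pt * (1 - qt)))
        < p * Real.log (pt * (1 - qt) / (qt * (1 - pt))) := by
      exact (mul_lt_mul_iff_right₀ hp0).mpr hLlb
    linarith
  refine ⟨ineq1, ineq2, ?_, ?_⟩
  · -- derivative in ψ0
    refine ⟨(1 - p) * Real.log (pt * (1 - qt) / (qt * (1 - pt)))
        - (1 - q) * ((pt - qt) / (qt * (1 - qt))), ineq1, ?_⟩
    have hP : HasDerivAt (fun x : ℝ => (1 - x - ψ1) * p + x) (1 - p) ψ0 := by
      have h := ((((hasDerivAt_const ψ0 (1:ℝ)).sub (hasDerivAt_id ψ0)).sub_const ψ1).mul_const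
        p).add (hasDerivAt_id ψ0)
      refine h.congr_deriv ?_
      ring
    have hQ : HasDerivAt (fun x : ℝ => (1 - x - ψ1) * q + x) (1 - q) ψ0 := by
      have h := ((((hasDerivAt_const ψ0 (1:ℝ)).sub (hasDerivAt_id ψ0)).sub_const ψ1).mul_const
        q).add (hasDerivAt_id ψ0)
      refine h.congr_deriv ?_
      ring
    have hPx : (1 - ψ0 - ψ1) * p + ψ0 = pt := hpt.symm
    have hQx : (1 - ψ0 - ψ1) * q + ψ0 = qt := hqt.symm
    have key := hasDerivAt_Hcomp (fun x : ℝ => (1 - x - ψ1) * p + x)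
      (fun x : ℝ => (1 - x - ψ1) * q + x) (1 - p) (1 - q) ψ0 hP hQ
      (by simpa [hPx] using hpt0) (by simpa [hPx] using hpt1)
      (by simpa [hQx] using hqt0) (by simpa [hQx] using hqt1)
    simp only [hPx, hQx] at key
    simp only [hH]
    convert key using 1
    ring
  · refine ⟨(-p) * Real.log (pt * (1 - qt) / (qt * (1 - pt)))
        + q * ((pt - qt) / (qt * (1 - qt))), ineq2, ?_⟩
    have hP : HasDerivAt (fun y : ℝ => (1 - ψ0 - y) * p + ψ0) (-p) ψ1 := by
      have h := ((((hasDerivAt_const ψ1 (1:ℝ)).sub_const ψ0).sub (hasDerivAt_id ψ1)).mul_const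
        p).add_const ψ0
      refine h.congr_deriv ?_
      ring
    have hQ : HasDerivAt (fun y : ℝ => (1 - ψ0 - y) * q + ψ0) (-q) ψ1 := by
      have h := ((((hasDerivAt_const ψ1 (1:ℝ)).sub_const ψ0).sub (hasDerivAt_id ψ1)).mul_const
        q).add_const ψ0
      refine h.congr_deriv ?_
      ring
    have hPx : (1 - ψ0 - ψ1) * p + ψ0 = pt := hpt.symm
    have hQx : (1 - ψ0 - ψ1) * q + ψ0 = qt := hqt.symm
    have key := hasDerivAt_Hcomp (fun y : ℝ => (1 - ψ0 - y) * p + ψ0)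
      (fun y : ℝ => (1 - ψ0 - y) * q + ψ0) (-p) (-q) ψ1 hP hQ
      (by simpa [hPx] using hpt0) (by simpa [hPx] using hpt1)
      (by simpa [hQx] using hqt0) (by simpa [hQx] using hqt1)
    simp only [hPx, hQx] at key
    simp only [hH]
    convert key using 1
    ring
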